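/- In the Algorithm 1 setting, let F: [0,1]^n → [0,∞) be a nonnegative continuously differentiable DR-submodular function, let q* ∈ Q and p* ∈ P satisfy q* + p* ≤ 1, and set o = q* + p*. Fix an integer 1 ≤ i ≤ 1/ε and write w = y⁽ⁱ⁻¹⁾⊛z⁽ⁱ⁻¹⁾. If ⟨∇F(w)⊙(1 − z⁽ⁱ⁻¹⁾), a⁽ⁱ⁾ + b⁽ⁱ⁾⊙(1 − y⁽ⁱ⁻¹⁾)⟩ ≥ ⟨∇F(w)⊙(1 − z⁽ⁱ⁻¹⁾), q* + p*⊙(1 − y⁽ⁱ⁻¹⁾)⟩, then ⟨∇F(w)⊙(1 − z⁽ⁱ⁻¹⁾), a⁽ⁱ⁾ + b⁽ⁱ⁾⊙(1 − y⁽ⁱ⁻¹⁾)⟩ ≥ (1−ε)^{i−1}(1−m)·F(o) + (1−ε)^{i−1}(1−m)·F(z⁽ⁱ⁻¹⁾) + ⟨∇F(w), y⁽ⁱ⁻¹⁾⊙(1 − z⁽ⁱ⁻¹⁾)⟩ − 2·F(w). -/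

import Mathlib

open scoped InnerProductSpace
open Pointwise

noncomputable section

/-- Vectors in `ℝ^n`, with the Euclidean (ℓ₂) norm and inner product. -/
abbrev Vec (n : ℕ) := EuclideanSpace ℝ (Fin n)

/-- Membership in the box `[0,1]^n`. -/
def inBox {n : ℕ} (x : Vec n) : Prop := ∀ j, 0 ≤ x j ∧ x j ≤ 1

/-- Coordinate-wise (Hadamard) product `x ⊙ y`. -/
def had {n : ℕ} (x y : Vec n) : Vec n := WithLp.toLp 2 (fun j => x j * y j)

/-- Coordinate-wise probabilistic sum `x ⊛ y`. -/
def psum {n : ℕ} (x y : Vec n) : Vec n := WithLp.toLp 2 (fun j => x j + y j - x j * y j)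

/-- The vector `1 - x` (coordinate-wise). -/
def oneM {n : ℕ} (x : Vec n) : Vec n := WithLp.toLp 2 (fun j => 1 - x j)

/-- ℓ∞-norm. -/
def normInf {n : ℕ} (x : Vec n) : ℝ := ⨆ j, |x j|

/-- DR-submodularity of `F : [0,1]^n → ℝ`. -/
def DRSubmodular {n : ℕ} (F : Vec n → ℝ) : Prop :=
  ∀ a b : Vec n, inBox a → inBox b → (∀ j, a j ≤ b j) →
    ∀ k : ℝ, 0 < k → ∀ i : Fin n, inBox (b + EuclideanSpace.single i k) →
      F (b + EuclideanSpace.single i k) - F b ≤ F (a + EuclideanSpace.single i k) - F a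

/-- `P` is down-closed (with respect to the domain `[0,1]^n`). -/
def downClosed {n : ℕ} (P : Set (Vec n)) : Prop :=
  ∀ x y : Vec n, (∀ j, 0 ≤ x j) → (∀ j, x j ≤ y j) → y ∈ P → x ∈ P

/-- The Algorithm 1 setting: `Q ⊆ [0,1]^n` convex, `P ⊆ [0,1]^n` down-closed convex,
`ε ∈ (0,1)` with `1/ε = N ∈ ℕ`, and sequences `y⁽ⁱ⁾, z⁽ⁱ⁾` built from `a⁽ⁱ⁾ ∈ Q`,
`b⁽ⁱ⁾ ∈ P` satisfying `a⁽ⁱ⁾ + b⁽ⁱ⁾ ⊙ (1 − y⁽ⁱ⁻¹⁾) ≤ 1`, via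
`y⁽ⁱ⁾ = (1−ε)·y⁽ⁱ⁻¹⁾ + ε·a⁽ⁱ⁾` and `z⁽ⁱ⁾ = z⁽ⁱ⁻¹⁾ + ε·(1 − z⁽ⁱ⁻¹⁾) ⊙ b⁽ⁱ⁾`. -/
structure Alg1Setting {n : ℕ} (Q P : Set (Vec n)) (ε : ℝ) (N : ℕ)
    (y z a b : ℕ → Vec n) : Prop where
  hQbox : ∀ x ∈ Q, inBox x
  hQconv : Convex ℝ Q
  hPbox : ∀ x ∈ P, inBox x
  hPconv : Convex ℝ P
  hPdown : downClosed P
  hε0 : 0 < ε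
  hε1 : ε < 1
  hεN : (N : ℝ) * ε = 1
  hy0Q : y 0 ∈ Q
  hy0min : ∀ x ∈ Q, normInf (y 0) ≤ normInf x
  hz0 : z 0 = 0
  haQ : ∀ i, 1 ≤ i → i ≤ N → a i ∈ Q
  hbP : ∀ i, 1 ≤ i → i ≤ N → b i ∈ P
  hfeas : ∀ i, 1 ≤ i → i ≤ N → ∀ j, a i j + b i j * (1 - y (i-1) j) ≤ 1
  hyrec : ∀ i, 1 ≤ i → i ≤ N → y i = (1-ε) • y (i-1) + ε • a i
  hzrec : ∀ i, 1 ≤ i → i ≤ N → z i = z (i-1) + ε • had (oneM (z (i-1))) (b i)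

section Aux
open Filter Set
variable {n : ℕ} {F : Vec n → ℝ} {G : Vec n → Vec n}


lemma hasDerivAt_line (hG : ∀ x, inBox x → HasGradientAt F (G x) x)
    {p : Vec n} (hp : inBox p) (x v : Vec n) (t : ℝ) (hpt : p = x + t • v) :
    HasDerivAt (fun s : ℝ => F (x + s • v)) (⟪G p, v⟫_ℝ) t := by
  have hf : HasFDerivAt F ((InnerProductSpace.toDual ℝ (Vec n)) (G p)) p :=
    hasGradientAt_iff_hasFDerivAt.mp (hG p hp)
  rw [hpt] at hf
  have hc : HasDerivAt (fun s : ℝ => x + s • v) v t := by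
    simpa using ((hasDerivAt_id t).smul_const v).const_add x
  have := hf.comp_hasDerivAt t hc
  rw [hpt]
  simpa [Function.comp_def, InnerProductSpace.toDual_apply_apply] using this

lemma grad_coord_tendsto (hG : ∀ x, inBox x → HasGradientAt F (G x) x)
    {b : Vec n} (hb : inBox b) (j : Fin n) :
    Tendsto (fun k : ℝ => (F (b + EuclideanSpace.single j k) - F b) / k)
      (nhdsWithin 0 (Ioi 0)) (nhds (G b j)) := by
  have h : HasDerivAt (fun s : ℝ => F (b + s • EuclideanSpace.single j (1:ℝ)))
      (⟪G b, EuclideanSpace.single j (1:ℝ)⟫_ℝ) 0 :=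
    hasDerivAt_line hG hb b _ 0 (by simp)
  have h2 := hasDerivAt_iff_tendsto_slope.mp h
  have hmono : nhdsWithin (0:ℝ) (Ioi 0) ≤ nhdsWithin 0 {(0:ℝ)}ᶜ :=
    nhdsWithin_mono 0 (fun k hk => ne_of_gt hk)
  have h3 := h2.mono_left hmono
  have hval : ⟪G b, EuclideanSpace.single j (1:ℝ)⟫_ℝ = G b j := by
    simp [EuclideanSpace.inner_single_right]
  rw [hval] at h3
  refine h3.congr (fun k => ?_)
  have : (k • EuclideanSpace.single j (1:ℝ)) = EuclideanSpace.single j k := by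
    ext l; simp [EuclideanSpace.single_apply]
  simp [slope, this, div_eq_inv_mul, mul_comm]

lemma grad_anti_of_lt_one (hDR : DRSubmodular F)
    (hG : ∀ x, inBox x → HasGradientAt F (G x) x)
    {a b : Vec n} (ha : inBox a) (hb : inBox b) (hab : ∀ j, a j ≤ b j)
    (j : Fin n) (hbj : b j < 1) : G b j ≤ G a j := by
  have la := grad_coord_tendsto hG ha j
  have lb := grad_coord_tendsto hG hb j
  refine le_of_tendsto_of_tendsto lb la ?_
  have hmem : Ioo (0:ℝ) (1 - b j) ∈ nhdsWithin (0:ℝ) (Ioi 0) := by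
    apply Ioo_mem_nhdsGT_of_mem
    constructor
    · exact le_refl _
    · linarith
  filter_upwards [hmem] with k hk
  have hk0 : 0 < k := hk.1
  have hkb : k < 1 - b j := hk.2
  have hboxb : inBox (b + EuclideanSpace.single j k) := by
    intro l
    by_cases h : l = j
    · subst h
      simp [EuclideanSpace.single_apply]
      constructor
      · have := (hb l).1; linarith
      · linarith
    · simp [EuclideanSpace.single_apply, h]
      exact hb l
  have key := hDR a b ha hb hab k hk0 j hboxb
  exact (div_le_div_iff_of_pos_right hk0).mpr key

lemma seg_mem {x v : Vec n} {T : ℝ} (hx : inBox x) (hv : ∀ j, 0 ≤ v j)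
    (hxT : ∀ j, x j + T * v j ≤ 1) {t : ℝ} (ht : t ∈ Icc 0 T) :
    inBox (x + t • v) := by
  intro j
  have h1 : (x + t • v) j = x j + t * v j := by
    simp [PiLp.add_apply, PiLp.smul_apply]
  rw [h1]
  have hj := hx j
  have hvj := hv j
  constructor
  · nlinarith [ht.1]
  · nlinarith [ht.1, ht.2, hxT j, mul_le_mul_of_nonneg_right ht.2 hvj]

lemma seg_deriv_anti (hDR : DRSubmodular F)
    (hG : ∀ x, inBox x → HasGradientAt F (G x) x)
    (hGc : ContinuousOn G {x : Vec n | inBox x})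
    {x v : Vec n} {T : ℝ} (hx : inBox x) (hv : ∀ j, 0 ≤ v j)
    (hxT : ∀ j, x j + T * v j ≤ 1)
    {s t : ℝ} (hs : s ∈ Icc 0 T) (ht : t ∈ Icc 0 T) (hst : s ≤ t) :
    ⟪G (x + t • v), v⟫_ℝ ≤ ⟪G (x + s • v), v⟫_ℝ := by
  have hinner : ∀ u w : Vec n, ⟪u, w⟫_ℝ = ∑ j, u j * w j := by
    intro u w; simp [PiLp.inner_apply, RCLike.inner_apply, conj_trivial]
    exact Finset.sum_congr rfl (fun _ _ => mul_comm _ _)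
  rw [hinner, hinner]
  apply Finset.sum_le_sum
  intro j _
  rcases eq_or_lt_of_le (hv j) with hv0 | hvpos
  · rw [← hv0]; simp
  rcases eq_or_lt_of_le hst with rfl | hlt
  · exact le_refl _
  -- s < t, v j > 0
  have hmul : ∀ u : ℝ, (x + u • v) j = x j + u * v j := by
    intro u; simp [PiLp.add_apply, PiLp.smul_apply]
  have hstep : ∀ u ∈ Ico s t, G (x + u • v) j ≤ G (x + s • v) j := by
    intro u hu
    have huIcc : u ∈ Icc 0 T := ⟨le_trans hs.1 hu.1, le_trans hu.2.le ht.2⟩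
    apply grad_anti_of_lt_one hDR hG (seg_mem hx hv hxT hs) (seg_mem hx hv hxT huIcc)
    · intro l
      simp only [PiLp.add_apply, PiLp.smul_apply, smul_eq_mul]
      nlinarith [hv l, hu.1]
    · rw [hmul]
      have h1 : u * v j < t * v j := by nlinarith [hu.2]
      have h2 : t * v j ≤ T * v j := by nlinarith [ht.2, hv j]
      nlinarith [hxT j]
  have hpathc : ContinuousOn (fun u : ℝ => G (x + u • v) j) (Icc 0 T) := by
    have h1 : Continuous (fun u : ℝ => x + u • v) :=
      continuous_const.add (continuous_id.smul continuous_const)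
    have h2 : MapsTo (fun u : ℝ => x + u • v) (Icc 0 T) {p : Vec n | inBox p} :=
      fun u hu => seg_mem hx hv hxT hu
    exact (EuclideanSpace.proj j).continuous.comp_continuousOn
      (hGc.comp h1.continuousOn h2)
  have hcwa : ContinuousWithinAt (fun u : ℝ => G (x + u • v) j) (Ico s t) t := by
    apply (hpathc t ht).mono
    intro u hu; exact ⟨le_trans hs.1 hu.1, le_trans hu.2.le ht.2⟩
  have hne : (nhdsWithin t (Ico s t)).NeBot := right_nhdsWithin_Ico_neBot hlt
  have htend : Tendsto (fun u : ℝ => G (x + u • v) j) (nhdsWithin t (Ico s t))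
      (nhds (G (x + t • v) j)) := hcwa
  have hle : G (x + t • v) j ≤ G (x + s • v) j :=
    le_of_tendsto htend (eventually_mem_nhdsWithin.mono hstep)
  nlinarith [hv j]

lemma seg_mvt (hG : ∀ x, inBox x → HasGradientAt F (G x) x)
    {x v : Vec n} {T : ℝ} (hx : inBox x) (hv : ∀ j, 0 ≤ v j)
    (hxT : ∀ j, x j + T * v j ≤ 1)
    {α β : ℝ} (hα : 0 ≤ α) (hαβ : α < β) (hβ : β ≤ T) :
    ∃ ξ ∈ Ioo α β, ⟪G (x + ξ • v), v⟫_ℝ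
      = (F (x + β • v) - F (x + α • v)) / (β - α) := by
  have hderiv : ∀ t ∈ Icc 0 T,
      HasDerivAt (fun s : ℝ => F (x + s • v)) (⟪G (x + t • v), v⟫_ℝ) t := by
    intro t ht
    exact hasDerivAt_line hG (seg_mem hx hv hxT ht) x v t rfl
  have hcont : ContinuousOn (fun s : ℝ => F (x + s • v)) (Icc α β) := by
    intro t ht
    have htT : t ∈ Icc 0 T := ⟨le_trans hα ht.1, le_trans ht.2 hβ⟩
    exact (hderiv t htT).continuousAt.continuousWithinAt
  have := exists_hasDerivAt_eq_slope (fun s : ℝ => F (x + s • v))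
    (fun t => ⟪G (x + t • v), v⟫_ℝ) hαβ hcont ?_
  · exact this
  · intro t ht
    exact hderiv t ⟨le_trans hα ht.1.le, le_trans ht.2.le hβ⟩

lemma L1a (hDR : DRSubmodular F)
    (hG : ∀ x, inBox x → HasGradientAt F (G x) x)
    (hGc : ContinuousOn G {x : Vec n | inBox x})
    {x v : Vec n} (hx : inBox x) (hv : ∀ j, 0 ≤ v j) (hxv : inBox (x + v)) :
    F (x + v) - F x ≤ ⟪G x, v⟫_ℝ := by
  have hxT : ∀ j, x j + 1 * v j ≤ 1 := by
    intro j; have := (hxv j).2; simp only [PiLp.add_apply] at this; linarith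
  obtain ⟨ξ, hξ, heq⟩ := seg_mvt hG hx hv hxT (le_refl 0) one_pos (le_refl 1)
  have hanti := seg_deriv_anti hDR hG hGc hx hv hxT
    (Set.left_mem_Icc.mpr zero_le_one) ⟨hξ.1.le, hξ.2.le⟩ hξ.1.le
  rw [heq] at hanti
  have h0 : (x + (0:ℝ) • v) = x := by simp
  have h1 : (x + (1:ℝ) • v) = x + v := by simp
  rw [h0] at hanti
  rw [h1] at hanti
  simpa using hanti

lemma L1b (hDR : DRSubmodular F)
    (hG : ∀ x, inBox x → HasGradientAt F (G x) x)
    (hGc : ContinuousOn G {x : Vec n | inBox x})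
    {x v : Vec n} (hx : inBox x) (hv : ∀ j, 0 ≤ v j) (hxv : inBox (x + v)) :
    ⟪G (x + v), v⟫_ℝ ≤ F (x + v) - F x := by
  have hxT : ∀ j, x j + 1 * v j ≤ 1 := by
    intro j; have := (hxv j).2; simp only [PiLp.add_apply] at this; linarith
  obtain ⟨ξ, hξ, heq⟩ := seg_mvt hG hx hv hxT (le_refl 0) one_pos (le_refl 1)
  have hanti := seg_deriv_anti hDR hG hGc hx hv hxT
    ⟨hξ.1.le, hξ.2.le⟩ (Set.right_mem_Icc.mpr zero_le_one) hξ.2.le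
  rw [heq] at hanti
  have h0 : (x + (0:ℝ) • v) = x := by simp
  have h1 : (x + (1:ℝ) • v) = x + v := by simp
  rw [h0] at hanti
  rw [h1] at hanti
  simpa using hanti

lemma L2 (hDR : DRSubmodular F)
    (hG : ∀ x, inBox x → HasGradientAt F (G x) x)
    (hGc : ContinuousOn G {x : Vec n | inBox x})
    (hF0 : ∀ x, inBox x → 0 ≤ F x)
    {x v : Vec n} {c : ℝ} (hx : inBox x) (hv : ∀ j, 0 ≤ v j)
    (hc0 : 0 ≤ c) (hc1 : c ≤ 1) (hvc : ∀ j, v j ≤ c * (1 - x j)) :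
    (1 - c) * F x ≤ F (x + v) := by
  rcases eq_or_lt_of_le hc0 with hc | hcpos
  · -- c = 0 : v = 0
    have hv0 : v = 0 := by
      ext j
      have h1 := hvc j; have h2 := hv j
      have : v j = 0 := by rw [← hc] at h1; simp at h1; linarith
      simpa using this
    rw [hv0]
    simp [← hc]
  · set T : ℝ := 1 / c with hT
    have hT1 : 1 ≤ T := by
      rw [hT]; rw [le_div_iff₀ hcpos]; linarith
    have hxT : ∀ j, x j + T * v j ≤ 1 := by
      intro j
      have h1 := hvc j
      have h2 : T * v j ≤ T * (c * (1 - x j)) := by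
        apply mul_le_mul_of_nonneg_left h1
        positivity
      have h3 : T * (c * (1 - x j)) = 1 - x j := by
        rw [hT, ← mul_assoc, one_div_mul_cancel hcpos.ne', one_mul]
      linarith
    have hboxv : inBox (x + v) := by
      have := seg_mem hx hv hxT (⟨zero_le_one, hT1⟩ : (1:ℝ) ∈ Icc 0 T)
      simpa using this
    have hboxT : inBox (x + T • v) := seg_mem hx hv hxT ⟨by positivity, le_refl T⟩
    rcases eq_or_lt_of_le hT1 with hTeq | hTgt
    · -- T = 1, c = 1
      have : c = 1 := by
        rw [hT] at hTeq
        field_simp at hTeq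
        linarith
      rw [this]
      simpa using hF0 _ hboxv
    · obtain ⟨ξ₁, hξ₁, heq₁⟩ := seg_mvt hG hx hv hxT (le_refl 0) one_pos hT1
      obtain ⟨ξ₂, hξ₂, heq₂⟩ := seg_mvt hG hx hv hxT zero_le_one hTgt (le_refl T)
      have hanti := seg_deriv_anti hDR hG hGc hx hv hxT
        ⟨hξ₁.1.le, hξ₁.2.le.trans hT1⟩ ⟨zero_le_one.trans hξ₂.1.le, hξ₂.2.le⟩
        (hξ₁.2.le.trans hξ₂.1.le)
      rw [heq₁, heq₂] at hanti
      have h0 : (x + (0:ℝ) • v) = x := by simp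
      have h1 : (x + (1:ℝ) • v) = x + v := by simp
      rw [h0, h1] at hanti
      have hFT : 0 ≤ F (x + T • v) := hF0 _ hboxT
      have hFx : 0 ≤ F x := hF0 _ hx
      -- hanti : (F (x+T•v) - F (x+v))/(T-1) ≤ (F (x+v) - F x)/(1-0)
      have hTpos : 0 < T - 1 := by linarith
      rw [div_le_iff₀ hTpos] at hanti
      simp only [sub_zero, div_one] at hanti
      -- F(x+T•v) - F(x+v) ≤ (F(x+v) - F x) * (T-1)
      have hcT : c * T = 1 := by rw [hT, mul_one_div_cancel hcpos.ne']
      nlinarith [hanti, hFT, hFx, hcpos, hTpos, mul_pos hcpos hTpos]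
lemma normInf_def {x : Vec n} : normInf x = ⨆ j, |x j| := rfl

variable {Q P : Set (Vec n)} {ε : ℝ} {N : ℕ} {y z a b : ℕ → Vec n}

lemma yQ (H : Alg1Setting Q P ε N y z a b) : ∀ k, k ≤ N → y k ∈ Q := by
  intro k
  induction k with
  | zero => intro _; exact H.hy0Q
  | succ k ih =>
    intro hk
    have h1 : k + 1 - 1 = k := by omega
    have h2 := H.hyrec (k+1) (by omega) hk
    rw [h1] at h2
    rw [h2]
    exact H.hQconv (ih (by omega)) (H.haQ (k+1) (by omega) hk)
      (by linarith [H.hε1]) (le_of_lt H.hε0) (by ring)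

lemma zBox (H : Alg1Setting Q P ε N y z a b) : ∀ k, k ≤ N → inBox (z k) := by
  intro k
  induction k with
  | zero => intro _; rw [H.hz0]; intro j; simp
  | succ k ih =>
    intro hk
    have h1 : k + 1 - 1 = k := by omega
    have h2 := H.hzrec (k+1) (by omega) hk
    rw [h1] at h2
    intro j
    have h3 : z (k+1) j = z k j + ε * ((1 - z k j) * b (k+1) j) := by
      rw [h2]; simp [PiLp.add_apply, PiLp.smul_apply, had, oneM]
    have hz := ih (by omega) j
    have hb := H.hPbox _ (H.hbP (k+1) (by omega) hk) j
    have hε0 := H.hε0; have hε1 := H.hε1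
    rw [h3]
    have h4 : (1 - z k j) * b (k+1) j ≤ 1 - z k j :=
      mul_le_of_le_one_right (by linarith [hz.2]) hb.2
    have h5 : 0 ≤ (1 - z k j) * b (k+1) j :=
      mul_nonneg (by linarith [hz.2]) hb.1
    constructor
    · nlinarith
    · nlinarith


lemma mInf_nonneg (x : Vec n) : 0 ≤ normInf x :=
  Real.iSup_nonneg (fun j => abs_nonneg _)

lemma mInf_le_one {x : Vec n} (hx : inBox x) : normInf x ≤ 1 :=
  Real.iSup_le (fun j => abs_le.mpr ⟨by linarith [(hx j).1], (hx j).2⟩) zero_le_one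

lemma coord_le_mInf (x : Vec n) (j : Fin n) : x j ≤ normInf x :=
  le_trans (le_abs_self _) (le_ciSup (f := fun j => |x j|) (Set.Finite.bddAbove (Set.finite_range _)) j)

lemma key_inv (H : Alg1Setting Q P ε N y z a b) :
    ∀ k, k ≤ N → ∀ j, (1-ε)^k * (1 - normInf (y 0)) ≤ (1 - y k j) * (1 - z k j) := by
  intro k
  induction k with
  | zero =>
    intro _ j
    rw [H.hz0]
    simp only [pow_zero, one_mul, PiLp.zero_apply, sub_zero, mul_one]
    linarith [coord_le_mInf (y 0) j]
  | succ k ih =>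
    intro hk j
    have h1 : k + 1 - 1 = k := by omega
    have hyr := H.hyrec (k+1) (by omega) hk
    have hzr := H.hzrec (k+1) (by omega) hk
    rw [h1] at hyr hzr
    have hy1 : y (k+1) j = (1-ε) * y k j + ε * a (k+1) j := by
      rw [hyr]; simp [PiLp.add_apply, PiLp.smul_apply]
    have hz1 : z (k+1) j = z k j + ε * ((1 - z k j) * b (k+1) j) := by
      rw [hzr]; simp [PiLp.add_apply, PiLp.smul_apply, had, oneM]
    have hfe := H.hfeas (k+1) (by omega) hk j
    rw [h1] at hfe
    have hyb := H.hQbox _ (yQ H k (by omega)) j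
    have hzb := zBox H k (by omega) j
    have hab := H.hQbox _ (H.haQ (k+1) (by omega) hk) j
    have hbb := H.hPbox _ (H.hbP (k+1) (by omega) hk) j
    have hε0 := H.hε0; have hε1 := H.hε1
    have ihj := ih (by omega) j
    set E := ε
    set Yj := y k j; set Zj := z k j; set Bj := b (k+1) j; set Aj := a (k+1) j
    have e1 : 1 - y (k+1) j ≥ (1 - Yj) * (1 - E + E * Bj) := by
      rw [hy1]
      nlinarith [hfe]
    have e1' : 0 ≤ 1 - y (k+1) j := by
      rw [hy1]; nlinarith [hyb.2, hab.2]
    have e2 : 1 - z (k+1) j = (1 - Zj) * (1 - E * Bj) := by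
      rw [hz1]; ring
    have hB : (1 - E + E * Bj) * (1 - E * Bj) ≥ 1 - E := by
      have h9 : 0 ≤ E * E * Bj * (1 - Bj) :=
        mul_nonneg (mul_nonneg (mul_nonneg hε0.le hε0.le) hbb.1) (by linarith [hbb.2])
      nlinarith [h9]
    have hYZ : 0 ≤ (1 - Yj) * (1 - Zj) := mul_nonneg (by linarith [hyb.2]) (by linarith [hzb.2])
    have hEBprod : E * Bj ≤ 1 * 1 := mul_le_mul hε1.le hbb.2 hbb.1 zero_le_one
    have hEBnn : 0 ≤ E * Bj := mul_nonneg hε0.le hbb.1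
    have hEB : 0 ≤ 1 - E * Bj := by linarith
    have hEB2 : 0 ≤ 1 - E + E * Bj := by linarith
    have hZE : 0 ≤ (1 - Zj) * (1 - E * Bj) := mul_nonneg (by linarith [hzb.2]) hEB
    have step : ((1-Yj)*(1-E+E*Bj)) * ((1-Zj)*(1-E*Bj)) ≤ (1 - y (k+1) j) * (1 - z (k+1) j) := by
      rw [e2]
      exact mul_le_mul_of_nonneg_right e1 hZE
    have step2 : ((1 - Yj) * (1 - Zj)) * ((1 - E + E * Bj) * (1 - E * Bj)) ≥
        ((1 - Yj) * (1 - Zj)) * (1 - E) := by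
      exact mul_le_mul_of_nonneg_left hB hYZ
    have step3 : ((1 - Yj) * (1 - Zj)) * (1 - E) ≥ ((1-E)^k * (1 - normInf (y 0))) * (1 - E) := by
      apply mul_le_mul_of_nonneg_right ihj (by linarith)
    calc (1-E)^(k+1) * (1 - normInf (y 0)) = ((1-E)^k * (1 - normInf (y 0))) * (1-E) := by ring
    _ ≤ ((1 - Yj) * (1 - Zj)) * (1 - E) := step3
    _ ≤ ((1 - Yj) * (1 - Zj)) * ((1 - E + E * Bj) * (1 - E * Bj)) := step2
    _ = ((1-Yj)*(1-E+E*Bj)) * ((1-Zj)*(1-E*Bj)) := by ring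
    _ ≤ (1 - y (k+1) j) * (1 - z (k+1) j) := step

end Aux

set_option maxHeartbeats 2000000 in
/-- Lemma 4.5 / `lemma:right`: in the Algorithm 1 setting, with `F`
nonnegative continuously differentiable DR-submodular with gradient `G`, `q* ∈ Q`, `p* ∈ P`,
`q* + p* ≤ 1`, `o = q* + p*`, `m = ‖y⁽⁰⁾‖∞` and `w = y⁽ⁱ⁻¹⁾ ⊛ z⁽ⁱ⁻¹⁾`:
if the LP value at `(a⁽ⁱ⁾, b⁽ⁱ⁾)` is at least its value at `(q*, p*)`, then it is at least
`(1−ε)^{i−1}(1−m)·F(o) + (1−ε)^{i−1}(1−m)·F(z⁽ⁱ⁻¹⁾) + ⟪∇F(w), y⁽ⁱ⁻¹⁾ ⊙ (1 − z⁽ⁱ⁻¹⁾)⟫ − 2F(w)`. -/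
theorem stmt_5 {n : ℕ} (Q P : Set (Vec n)) (ε : ℝ) (N : ℕ) (y z a b : ℕ → Vec n)
    (H : Alg1Setting Q P ε N y z a b)
    (F : Vec n → ℝ) (G : Vec n → Vec n)
    (hF0 : ∀ x, inBox x → 0 ≤ F x)
    (hDR : DRSubmodular F)
    (hGrad : ∀ x, inBox x → HasGradientAt F (G x) x)
    (hGcont : ContinuousOn G {x : Vec n | inBox x})
    (q p : Vec n) (hq : q ∈ Q) (hp : p ∈ P) (hqp : ∀ j, q j + p j ≤ 1)
    (o : Vec n) (ho : o = q + p)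
    (m : ℝ) (hm : m = normInf (y 0))
    (i : ℕ) (hi1 : 1 ≤ i) (hiN : i ≤ N)
    (w : Vec n) (hw : w = psum (y (i-1)) (z (i-1)))
    (hobj : ⟪had (G w) (oneM (z (i-1))), q + had p (oneM (y (i-1)))⟫_ℝ ≤
            ⟪had (G w) (oneM (z (i-1))), a i + had (b i) (oneM (y (i-1)))⟫_ℝ) :
    (1 - ε)^(i-1) * (1 - m) * F o + (1 - ε)^(i-1) * (1 - m) * F (z (i-1))
      + ⟪G w, had (y (i-1)) (oneM (z (i-1)))⟫_ℝ - 2 * F w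
    ≤ ⟪had (G w) (oneM (z (i-1))), a i + had (b i) (oneM (y (i-1)))⟫_ℝ := by
  have hε0 := H.hε0; have hε1 := H.hε1
  set k := i - 1 with hk
  have hkN : k ≤ N := by omega
  set Y := y k with hY
  set Z := z k with hZ
  have hYbox : inBox Y := H.hQbox _ (yQ H k hkN)
  have hZbox : inBox Z := zBox H k hkN
  have hqbox : inBox q := H.hQbox q hq
  have hpbox : inBox p := H.hPbox p hp
  have hoj : ∀ j, o j = q j + p j := by
    intro j; rw [ho]; simp [PiLp.add_apply]
  have hobox : inBox o := by
    intro j; rw [hoj j]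
    exact ⟨add_nonneg (hqbox j).1 (hpbox j).1, hqp j⟩
  have hwj : ∀ j, w j = Y j + Z j - Y j * Z j := by
    intro j; rw [hw]; rfl
  have hwbox : inBox w := by
    intro j; rw [hwj j]
    have h1 := hYbox j; have h2 := hZbox j
    constructor
    · nlinarith
    · nlinarith
  -- the scaling constant
  have hm0 : 0 ≤ m := hm ▸ mInf_nonneg (y 0)
  have hm1 : m ≤ 1 := hm ▸ mInf_le_one (H.hQbox _ H.hy0Q)
  set c : ℝ := 1 - (1-ε)^k * (1-m) with hcdef
  have hpow0 : 0 ≤ (1-ε)^k := pow_nonneg (by linarith) k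
  have hpow1 : (1-ε)^k ≤ 1 := pow_le_one₀ (by linarith) (by linarith)
  have hc0 : 0 ≤ c := by
    have : (1-ε)^k * (1-m) ≤ 1 * 1 := mul_le_mul hpow1 (by linarith) (by linarith) zero_le_one
    rw [hcdef]; linarith
  have hc1 : c ≤ 1 := by
    have : 0 ≤ (1-ε)^k * (1-m) := mul_nonneg hpow0 (by linarith)
    rw [hcdef]; linarith
  have hwc : ∀ j, w j ≤ c := by
    intro j
    have hkey := key_inv H k hkN j
    rw [← hm] at hkey
    have : (1 - Y j) * (1 - Z j) = 1 - w j := by rw [hwj j]; ring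
    rw [this] at hkey
    rw [hcdef]; linarith
  have hYc : ∀ j, Y j ≤ c := by
    intro j
    have h1 := hYbox j; have h2 := hZbox j
    have : Y j ≤ w j := by rw [hwj j]; nlinarith
    linarith [hwc j]
  -- direction vectors
  set u1 : Vec n := had o (oneM w) with hu1
  set u2 : Vec n := had w (oneM o) with hu2
  set u3 : Vec n := had (had q Y) (oneM Z) with hu3
  set u4 : Vec n := had (had (oneM q) Y) (oneM Z) with hu4
  have hu1j : ∀ j, u1 j = o j * (1 - w j) := fun j => rfl
  have hu2j : ∀ j, u2 j = w j * (1 - o j) := fun j => rfl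
  have hu3j : ∀ j, u3 j = q j * Y j * (1 - Z j) := fun j => rfl
  have hu4j : ∀ j, u4 j = (1 - q j) * Y j * (1 - Z j) := fun j => rfl
  have hu1nn : ∀ j, 0 ≤ u1 j := by
    intro j; rw [hu1j j]; have := hobox j; have := hwbox j
    exact mul_nonneg (by tauto) (by linarith [(hwbox j).2])
  have hu2nn : ∀ j, 0 ≤ u2 j := by
    intro j; rw [hu2j j]
    exact mul_nonneg (hwbox j).1 (by linarith [(hobox j).2])
  have hu3nn : ∀ j, 0 ≤ u3 j := by
    intro j; rw [hu3j j]
    exact mul_nonneg (mul_nonneg (hqbox j).1 (hYbox j).1) (by linarith [(hZbox j).2])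
  have hu4nn : ∀ j, 0 ≤ u4 j := by
    intro j; rw [hu4j j]
    exact mul_nonneg (mul_nonneg (by linarith [(hqbox j).2]) (hYbox j).1) (by linarith [(hZbox j).2])
  have haddj : ∀ (x v : Vec n) (j : Fin n), (x + v) j = x j + v j := by
    intro x v j; simp [PiLp.add_apply]
  -- A1 : at w in direction u1
  have hwu1 : inBox (w + u1) := by
    intro j; rw [haddj, hu1j j]
    have h1 := hwbox j; have h2 := hobox j
    constructor
    · nlinarith
    · nlinarith
  have A1 : F (w + u1) - F w ≤ ⟪G w, u1⟫_ℝ := L1a hDR hGrad hGcont hwbox hu1nn hwu1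
  -- A2 : scaling at o in direction u2
  have A2 : (1-c) * F o ≤ F (o + u2) := by
    apply L2 hDR hGrad hGcont hF0 hobox hu2nn hc0 hc1
    intro j; rw [hu2j j]
    have := (hobox j).2
    exact mul_le_mul_of_nonneg_right (hwc j) (by linarith)
  have Aeq : w + u1 = o + u2 := by
    ext j
    show (w + u1) j = (o + u2) j
    rw [haddj, haddj, hu1j j, hu2j j]; ring
  -- A4 : scaling at Z in direction u3
  have A4 : (1-c) * F Z ≤ F (Z + u3) := by
    apply L2 hDR hGrad hGcont hF0 hZbox hu3nn hc0 hc1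
    intro j; rw [hu3j j]
    have h1 := (hqbox j); have h2 := (hYbox j); have h3 := (hZbox j)
    have : q j * Y j ≤ c := by
      calc q j * Y j ≤ 1 * Y j := mul_le_mul_of_nonneg_right h1.2 h2.1
      _ = Y j := by ring
      _ ≤ c := hYc j
    nlinarith
  -- A3 : at Z + u3 in direction u4, with (Z + u3) + u4 = w
  have hx2box : inBox (Z + u3) := by
    intro j; rw [haddj, hu3j j]
    have h1 := (hqbox j); have h2 := (hYbox j); have h3 := (hZbox j)
    have hqY0 : 0 ≤ q j * Y j := mul_nonneg h1.1 h2.1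
    have hqY1 : q j * Y j ≤ 1 := mul_le_one₀ h1.2 h2.1 h2.2
    have hprod : 0 ≤ (1 - Z j) * (1 - q j * Y j) :=
      mul_nonneg (by linarith [h3.2]) (by linarith)
    constructor
    · nlinarith
    · nlinarith [hprod]
  have Beq : (Z + u3) + u4 = w := by
    ext j
    show ((Z + u3) + u4) j = w j
    rw [haddj, haddj, hu3j j, hu4j j, hwj j]; ring
  have hwbox' : inBox ((Z + u3) + u4) := Beq ▸ hwbox
  have A3 : ⟪G ((Z + u3) + u4), u4⟫_ℝ ≤ F ((Z + u3) + u4) - F (Z + u3) :=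
    L1b hDR hGrad hGcont hx2box hu4nn hwbox'
  rw [Beq] at A3
  -- the inner product identity
  have hinner : ∀ u v : Vec n, ⟪u, v⟫_ℝ = ∑ j, u j * v j := by
    intro u v; simp [PiLp.inner_apply, RCLike.inner_apply, conj_trivial]
    exact Finset.sum_congr rfl (fun _ _ => mul_comm _ _)
  have Ident : ⟪had (G w) (oneM Z), q + had p (oneM Y)⟫_ℝ
      = ⟪G w, u1⟫_ℝ + ⟪G w, had Y (oneM Z)⟫_ℝ - ⟪G w, u4⟫_ℝ := by
    rw [hinner, hinner, hinner, hinner]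
    rw [← Finset.sum_add_distrib, ← Finset.sum_sub_distrib]
    refine Finset.sum_congr rfl (fun j _ => ?_)
    have e1 : had (G w) (oneM Z) j = G w j * (1 - Z j) := rfl
    have e2 : (q + had p (oneM Y)) j = q j + p j * (1 - Y j) := by
      rw [haddj]; rfl
    have e3 : had Y (oneM Z) j = Y j * (1 - Z j) := rfl
    rw [e1, e2, e3, hu1j j, hu4j j, hwj j, hoj j]
    ring
  -- conclusion
  have final : (1-c) * F o + (1-c) * F Z + ⟪G w, had Y (oneM Z)⟫_ℝ - 2 * F w
      ≤ ⟪had (G w) (oneM Z), q + had p (oneM Y)⟫_ℝ := by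
    rw [Ident]
    have h1 : F (o + u2) - F w ≤ ⟪G w, u1⟫_ℝ := by rw [← Aeq]; exact A1
    linarith [A2, A3, A4]
  have hfc : (1 - ε)^k * (1 - m) = 1 - c := by rw [hcdef]; ring
  rw [hfc]
  exact final.trans hobj
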